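/- For every l with 1 < l < 2 there exists a constant C_l > 0 such that for all vectors a, b in ℝ^N: |a-b|^l ≤ C_l ((|a|^{l-2}a - |b|^{l-2}b)·(a-b))^{l/2} (|a|^l + |b|^l)^{(2-l)/2}. -/

import Mathlib

open Real

set_option maxHeartbeats 1000000

lemma aux_mul {l x : ℝ} (hx : 0 ≤ x) (hl : l ≠ 0) : x ^ (l - 1) * x = x ^ l := by
  rw [← Real.rpow_add_one' hx (by simpa using hl), sub_add_cancel]

lemma aux_mul2 {l x : ℝ} (hx : 0 ≤ x) (hl : l ≠ 1) : x ^ (l - 2) * x = x ^ (l - 1) := by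
  have h := Real.rpow_add_one' (y := l - 2) hx (by intro h; apply hl; linarith)
  rw [show l - 2 + 1 = l - 1 from by ring] at h
  exact h.symm

lemma epos {l A B : ℝ} (hl1 : 1 < l) (hl2 : l < 2) (hB : 0 ≤ B) (hBA : B ≤ A) :
    (l-1) * (A-B) * (A+B) ^ (l-2) ≤ A ^ (l-1) - B ^ (l-1) := by
  have hA : 0 ≤ A := hB.trans hBA
  rcases hA.eq_or_lt with h | hA
  · have hB0 : B = 0 := le_antisymm (hBA.trans h.ge) hB
    simp [← h, hB0]
  · set t := B / A with ht
    have ht0 : 0 ≤ t := div_nonneg hB hA.le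
    have ht1 : t ≤ 1 := (div_le_one hA).2 hBA
    have hgm := Real.geom_mean_le_arith_mean2_weighted (by linarith : (0:ℝ) ≤ l - 1)
      (by linarith : (0:ℝ) ≤ 2 - l) ht0 (by norm_num : (0:ℝ) ≤ 1) (by ring)
    rw [Real.one_rpow, mul_one, mul_one] at hgm
    have hBt : B = t * A := by rw [ht, div_mul_cancel₀ B hA.ne']
    have hBrl : B ^ (l-1) = t ^ (l-1) * A ^ (l-1) := by
      rw [hBt, Real.mul_rpow ht0 hA.le]
    have hA1 : (0:ℝ) < A ^ (l-1) := Real.rpow_pos_of_pos hA _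
    have hAl2 : A ^ (l-2) * A = A ^ (l-1) := aux_mul2 hA.le (by linarith)
    have step1 : (l-1) * (A-B) * A ^ (l-2) ≤ A ^ (l-1) - B ^ (l-1) := by
      have h2 : B ^ (l-1) ≤ ((l-1)*t + (2-l)) * A ^ (l-1) := by
        rw [hBrl]; exact mul_le_mul_of_nonneg_right hgm hA1.le
      have hta : (1 - t) * A = A - B := by rw [hBt]; ring
      have h3 : (1 - ((l-1)*t + (2-l))) * A ^ (l-1) = (l-1) * (A-B) * A ^ (l-2) := by
        rw [show (1 - ((l-1)*t + (2-l))) = (l-1) * (1-t) from by ring, ← hAl2]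
        linear_combination (l-1) * A ^ (l-2) * hta
      nlinarith [h2, h3]
    have hmono : (A+B) ^ (l-2) ≤ A ^ (l-2) :=
      Real.rpow_le_rpow_of_nonpos hA (by linarith) (by linarith)
    calc (l-1) * (A-B) * (A+B) ^ (l-2) ≤ (l-1) * (A-B) * A ^ (l-2) := by
          apply mul_le_mul_of_nonneg_left hmono; nlinarith
      _ ≤ _ := step1

lemma key {l A B s : ℝ} (hl1 : 1 < l) (hl2 : l < 2) (hA : 0 ≤ A) (hB : 0 ≤ B)
    (hs : |s| ≤ A * B) :
    (l-1) * (A^2 + B^2 - 2*s) * (A+B) ^ (l-2) ≤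
      A ^ l + B ^ l - (A ^ (l-2) + B ^ (l-2)) * s := by
  obtain ⟨hs1, hs2⟩ := abs_le.mp hs
  have hl0 : l ≠ 0 := by linarith
  have hl10 : l ≠ 1 := by linarith
  have hAl1A : A ^ (l-1) * A = A ^ l := aux_mul hA hl0
  have hBl1B : B ^ (l-1) * B = B ^ l := aux_mul hB hl0
  have hAl2A : A ^ (l-2) * A = A ^ (l-1) := aux_mul2 hA hl10
  have hBl2B : B ^ (l-2) * B = B ^ (l-1) := aux_mul2 hB hl10
  -- endpoint s = A*B
  have hplus : (l-1) * (A-B)^2 * (A+B) ^ (l-2) ≤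
      A ^ l + B ^ l - (A ^ (l-2) + B ^ (l-2)) * (A*B) := by
    have main : ∀ X Y : ℝ, 0 ≤ Y → Y ≤ X →
        (l-1) * (X-Y)^2 * (X+Y) ^ (l-2) ≤
          X ^ l + Y ^ l - (X ^ (l-2) + Y ^ (l-2)) * (X*Y) := by
      intro X Y hY hYX
      have hX : 0 ≤ X := hY.trans hYX
      have h1 := epos hl1 hl2 hY hYX
      have hXl1X : X ^ (l-1) * X = X ^ l := aux_mul hX hl0
      have hYl1Y : Y ^ (l-1) * Y = Y ^ l := aux_mul hY hl0
      have hXl2X : X ^ (l-2) * X = X ^ (l-1) := aux_mul2 hX hl10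
      have hYl2Y : Y ^ (l-2) * Y = Y ^ (l-1) := aux_mul2 hY hl10
      have h2 : (X ^ (l-1) - Y ^ (l-1)) * (X - Y) =
          X ^ l + Y ^ l - (X ^ (l-2) + Y ^ (l-2)) * (X*Y) := by
        linear_combination hXl1X + hYl1Y + Y * hXl2X + X * hYl2Y
      have h4 := mul_le_mul_of_nonneg_right h1 (by linarith : (0:ℝ) ≤ X - Y)
      calc (l-1) * (X-Y)^2 * (X+Y) ^ (l-2)
          = (l-1) * (X-Y) * (X+Y) ^ (l-2) * (X-Y) := by ring
        _ ≤ (X ^ (l-1) - Y ^ (l-1)) * (X - Y) := h4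
        _ = _ := h2
    rcases le_total B A with h | h
    · exact main A B hB h
    · calc (l-1) * (A-B)^2 * (A+B) ^ (l-2) = (l-1) * (B-A)^2 * (B+A) ^ (l-2) := by ring_nf
      _ ≤ B ^ l + A ^ l - (B ^ (l-2) + A ^ (l-2)) * (B*A) := main B A hA h
      _ = A ^ l + B ^ l - (A ^ (l-2) + B ^ (l-2)) * (A*B) := by ring
  -- endpoint s = -(A*B)
  have hminus : (l-1) * (A+B)^2 * (A+B) ^ (l-2) ≤
      A ^ l + B ^ l + (A ^ (l-2) + B ^ (l-2)) * (A*B) := by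
    rcases eq_or_lt_of_le (by positivity : (0:ℝ) ≤ A + B) with h | h
    · have hA0 : A = 0 := by nlinarith
      have hB0 : B = 0 := by nlinarith
      simp [hA0, hB0, Real.zero_rpow (show l - 2 ≠ 0 by intro h; linarith),
        Real.zero_rpow hl0]
    · have hsub : (A+B) ^ (l-1) ≤ A ^ (l-1) + B ^ (l-1) := by
        have h0 := NNReal.rpow_add_le_add_rpow (p := l-1) ⟨A, hA⟩ ⟨B, hB⟩
          (by linarith) (by linarith)
        have h2 := NNReal.coe_le_coe.2 h0
        push_cast [NNReal.coe_rpow] at h2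
        exact h2
      have hl1' : (l-1) * (A+B) ^ (l-1) ≤ A ^ (l-1) + B ^ (l-1) := by
        nlinarith [Real.rpow_nonneg (show (0:ℝ) ≤ A + B by positivity) (l-1)]
      have hABl2 : (A+B) ^ (l-2) * (A+B) = (A+B) ^ (l-1) :=
        aux_mul2 (by positivity) hl10
      have hrhs : (A ^ (l-1) + B ^ (l-1)) * (A+B) =
          A ^ l + B ^ l + (A ^ (l-2) + B ^ (l-2)) * (A*B) := by
        linear_combination hAl1A + hBl1B - B * hAl2A - A * hBl2B
      calc (l-1) * (A+B)^2 * (A+B) ^ (l-2)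
          = (l-1) * (A+B) ^ (l-2) * (A+B) * (A+B) := by ring
        _ = (l-1) * (A+B) ^ (l-1) * (A+B) := by rw [mul_assoc ((l-1)) _ (A+B), hABl2]
        _ ≤ (A ^ (l-1) + B ^ (l-1)) * (A+B) := mul_le_mul_of_nonneg_right hl1' h.le
        _ = _ := hrhs
  -- affine-in-s argument
  rcases le_total (A ^ (l-2) + B ^ (l-2)) (2*(l-1)*(A+B) ^ (l-2)) with hc | hc
  · nlinarith [hminus, mul_nonneg (sub_nonneg.2 hc) (show (0:ℝ) ≤ s + A*B by linarith)]
  · nlinarith [hplus, mul_nonneg (sub_nonneg.2 hc) (show (0:ℝ) ≤ A*B - s by linarith)]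

open scoped RealInnerProductSpace

theorem stmt_1 (N : ℕ) (l : ℝ) (hl1 : 1 < l) (hl2 : l < 2) :
    ∃ C : ℝ, 0 < C ∧ ∀ a b : EuclideanSpace ℝ (Fin N),
      ‖a - b‖ ^ l ≤
        C * (⟪(‖a‖ ^ (l - 2)) • a - (‖b‖ ^ (l - 2)) • b, a - b⟫) ^ (l / 2) *
          (‖a‖ ^ l + ‖b‖ ^ l) ^ ((2 - l) / 2) := by
  have hl1' : (0:ℝ) < l - 1 := by linarith
  have hl0 : l ≠ 0 := by linarith
  refine ⟨(l-1) ^ (-(l/2)) * 2 ^ (l*(2-l)/2), by positivity, fun a b => ?_⟩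
  rcases eq_or_lt_of_le (by positivity : (0:ℝ) ≤ ‖a‖ + ‖b‖) with hz | hpos
  · have ha0 : a = 0 := by
      rw [← norm_eq_zero]; nlinarith [norm_nonneg a, norm_nonneg b]
    have hb0 : b = 0 := by
      rw [← norm_eq_zero]; nlinarith [norm_nonneg a, norm_nonneg b]
    simp [ha0, hb0, Real.zero_rpow hl0, Real.zero_rpow (show l/2 ≠ 0 by positivity)]
  set A := ‖a‖ with hA
  set B := ‖b‖ with hB
  have hA0 : 0 ≤ A := norm_nonneg a
  have hB0 : 0 ≤ B := norm_nonneg b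
  set s := ⟪a, b⟫ with hs
  have hI : ⟪(A ^ (l - 2)) • a - (B ^ (l - 2)) • b, a - b⟫
      = A ^ l + B ^ l - (A ^ (l-2) + B ^ (l-2)) * s := by
    simp only [inner_sub_left, inner_sub_right, real_inner_smul_left,
      real_inner_self_eq_norm_sq, ← hA, ← hB, real_inner_comm b a, ← hs]
    have e1 : A ^ (l-2) * A^2 = A ^ l := by
      rw [sq, ← mul_assoc, aux_mul2 hA0 (by linarith), aux_mul hA0 hl0]
    have e2 : B ^ (l-2) * B^2 = B ^ l := by
      rw [sq, ← mul_assoc, aux_mul2 hB0 (by linarith), aux_mul hB0 hl0]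
    have e3 : (inner ℝ b a : ℝ) = s := by rw [hs]; exact real_inner_comm a b
    linear_combination e1 + e2 - (A ^ (l-2) + B ^ (l-2)) * e3
  rw [hI]
  set I := A ^ l + B ^ l - (A ^ (l-2) + B ^ (l-2)) * s with hIdef
  have hD : ‖a - b‖^2 = A^2 + B^2 - 2*s := by
    rw [norm_sub_sq_real]; ring
  have habs : |s| ≤ A * B := abs_real_inner_le_norm a b
  have hkey : (l-1) * ‖a-b‖^2 * (A+B) ^ (l-2) ≤ I := by
    rw [hD]; exact key hl1 hl2 hA0 hB0 habs
  have hD2 : (0:ℝ) ≤ ‖a-b‖^2 := sq_nonneg _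
  have hIpos : (0:ℝ) ≤ I := le_trans (by positivity) hkey
  have hone : (A+B)^(l-2) * (A+B)^(2-l) = 1 := by
    rw [← Real.rpow_add hpos]; norm_num
  have h2 : (l-1) * ‖a-b‖^2 ≤ (A+B)^(2-l) * I := by
    calc (l-1) * ‖a-b‖^2 = ((l-1) * ‖a-b‖^2 * (A+B)^(l-2)) * (A+B)^(2-l) := by
          rw [mul_assoc, hone]; ring
      _ ≤ I * (A+B)^(2-l) :=
          mul_le_mul_of_nonneg_right hkey (Real.rpow_nonneg hpos.le _)
      _ = (A+B)^(2-l) * I := mul_comm _ _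
  have hstep : ‖a-b‖^2 ≤ (l-1)⁻¹ * ((A+B)^(2-l) * I) := by
    rw [inv_mul_eq_div, le_div_iff₀ hl1']; linarith
  have hDl : ‖a-b‖ ^ l = (‖a-b‖^2 : ℝ) ^ (l/2) := by
    rw [← Real.rpow_natCast_mul (norm_nonneg _) 2 (l/2)]; congr 1; push_cast; ring
  have hmono : (‖a-b‖^2 : ℝ) ^ (l/2) ≤ ((l-1)⁻¹ * ((A+B)^(2-l) * I)) ^ (l/2) :=
    Real.rpow_le_rpow hD2 hstep (by positivity)
  have hsplit : ((l-1)⁻¹ * ((A+B)^(2-l) * I)) ^ (l/2)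
      = (l-1) ^ (-(l/2)) * (((A+B)^l) ^ ((2-l)/2) * I ^ (l/2)) := by
    rw [Real.mul_rpow (by positivity) (by positivity),
      Real.mul_rpow (by positivity) hIpos,
      Real.inv_rpow hl1'.le, ← Real.rpow_neg hl1'.le,
      ← Real.rpow_mul hpos.le, show (2-l)*(l/2) = l*((2-l)/2) from by ring,
      Real.rpow_mul hpos.le]
  have hmax : A + B ≤ 2 * max A B := by
    have := le_max_left A B; have := le_max_right A B; linarith
  have h2l : (A+B) ^ l ≤ 2 ^ l * (A ^ l + B ^ l) := by
    calc (A+B) ^ l ≤ (2 * max A B) ^ l :=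
          Real.rpow_le_rpow hpos.le hmax (by linarith)
      _ = 2 ^ l * (max A B) ^ l := Real.mul_rpow (by norm_num) (le_max_of_le_left hA0)
      _ ≤ 2 ^ l * (A ^ l + B ^ l) := by
          apply mul_le_mul_of_nonneg_left _ (by positivity)
          rcases le_total A B with h | h
          · rw [max_eq_right h]
            nlinarith [Real.rpow_nonneg hA0 l]
          · rw [max_eq_left h]
            nlinarith [Real.rpow_nonneg hB0 l]
  have hfin : ((A+B)^l) ^ ((2-l)/2) ≤ 2 ^ (l*(2-l)/2) * (A ^ l + B ^ l) ^ ((2-l)/2) := by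
    calc ((A+B)^l) ^ ((2-l)/2) ≤ (2 ^ l * (A ^ l + B ^ l)) ^ ((2-l)/2) :=
          Real.rpow_le_rpow (Real.rpow_nonneg hpos.le _) h2l (by linarith)
      _ = (2:ℝ) ^ (l*((2-l)/2)) * (A ^ l + B ^ l) ^ ((2-l)/2) := by
          rw [Real.mul_rpow (by positivity)
            (add_nonneg (Real.rpow_nonneg hA0 l) (Real.rpow_nonneg hB0 l)),
            ← Real.rpow_mul (by norm_num)]
      _ = 2 ^ (l*(2-l)/2) * (A ^ l + B ^ l) ^ ((2-l)/2) := by rw [mul_div_assoc]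
  calc ‖a-b‖ ^ l = (‖a-b‖^2 : ℝ) ^ (l/2) := hDl
    _ ≤ (l-1) ^ (-(l/2)) * (((A+B)^l) ^ ((2-l)/2) * I ^ (l/2)) := hsplit ▸ hmono
    _ ≤ (l-1) ^ (-(l/2)) * ((2 ^ (l*(2-l)/2) * (A ^ l + B ^ l) ^ ((2-l)/2)) * I ^ (l/2)) := by
        apply mul_le_mul_of_nonneg_left _ (by positivity)
        exact mul_le_mul_of_nonneg_right hfin (Real.rpow_nonneg hIpos _)
    _ = (l-1) ^ (-(l/2)) * 2 ^ (l*(2-l)/2) * I ^ (l/2) * (A ^ l + B ^ l) ^ ((2-l)/2) := by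
        ring
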